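/- If X⁽¹⁾ and X⁽²⁾ are real-valued square-integrable random variables on a probability space, then ‖L(X⁽¹⁾) − L(X⁽²⁾)‖²_{M₀} ≤ √π · E[(X⁽¹⁾ − X⁽²⁾)²], where L(X) denotes the law of X and the norm is ‖ν‖²_{M₀} = ∫ℝ |ν̂(y)|² e^{-y²} dy with ν̂(y) = ∫ℝ e^{ixy} dν(x). -/

import Mathlib

open MeasureTheory Complex Real

lemma norm_exp_I_mul_sub_one_le (t : ℝ) : ‖Complex.exp (t * Complex.I) - 1‖ ≤ |t| := by
  have h : Complex.exp (t * Complex.I) - 1 = ((Real.cos t - 1 : ℝ) : ℂ) + (Real.sin t : ℝ) * Complex.I := by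
    rw [Complex.exp_mul_I, ← Complex.ofReal_cos, ← Complex.ofReal_sin]
    push_cast
    ring
  rw [h, Complex.norm_add_mul_I]
  have hsq : (Real.cos t - 1) ^ 2 + Real.sin t ^ 2 = (2 * Real.sin (t / 2)) ^ 2 := by
    have h2 : Real.sin (t / 2) ^ 2 = 1 / 2 - Real.cos (2 * (t / 2)) / 2 :=
      Real.sin_sq_eq_half_sub (t / 2)
    have hc : Real.sin t ^ 2 = 1 - Real.cos t ^ 2 := by
      have := Real.sin_sq_add_cos_sq t; linarith
    rw [hc]
    have ht : 2 * (t / 2) = t := by ring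
    rw [ht] at h2
    nlinarith [h2]
  rw [hsq, Real.sqrt_sq_eq_abs, abs_mul, _root_.abs_two]
  have := Real.abs_sin_le_abs (x := t / 2)
  rw [abs_div, _root_.abs_two] at this
  linarith

lemma norm_exp_I_mul_sub_le (a b : ℝ) :
    ‖Complex.exp (a * Complex.I) - Complex.exp (b * Complex.I)‖ ≤ |a - b| := by
  have h : Complex.exp (a * Complex.I) - Complex.exp (b * Complex.I)
      = Complex.exp (b * Complex.I) * (Complex.exp ((a - b : ℝ) * Complex.I) - 1) := by
    rw [mul_sub, ← Complex.exp_add, mul_one]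
    push_cast
    ring_nf
  rw [h, norm_mul, Complex.norm_exp_ofReal_mul_I, one_mul]
  exact norm_exp_I_mul_sub_one_le _

lemma integral_sq_mul_exp_neg_sq : ∫ y : ℝ, y ^ 2 * Real.exp (-y ^ 2) = Real.sqrt π / 2 := by
  have h₁ : ∫ x in Set.Ioi (0:ℝ), x ^ (2:ℝ) * Real.exp (- x ^ (2:ℝ))
      = (1 / 2) * Real.Gamma ((2 + 1) / 2) :=
    integral_rpow_mul_exp_neg_rpow two_pos (by norm_num)
  have h₂ : ∫ x in Set.Ioi (0:ℝ), x ^ 2 * Real.exp (- x ^ 2)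
      = (1 / 2) * Real.Gamma ((2 + 1) / 2) := by
    rw [← h₁]
    refine setIntegral_congr_fun measurableSet_Ioi (fun x _ => ?_)
    norm_num [Real.rpow_natCast x 2]
  have hΓ : Real.Gamma ((2 + 1) / 2) = Real.sqrt π / 2 := by
    have : ((2 : ℝ) + 1) / 2 = 1 / 2 + 1 := by norm_num
    rw [this, Real.Gamma_add_one (by norm_num), Real.Gamma_one_half_eq]
    ring
  calc ∫ y : ℝ, y ^ 2 * Real.exp (-y ^ 2)
      = ∫ y : ℝ, (fun x : ℝ => x ^ 2 * Real.exp (-x ^ 2)) |y| := by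
        congr 1; funext y; simp [_root_.sq_abs]
    _ = 2 * ∫ x in Set.Ioi (0:ℝ), x ^ 2 * Real.exp (- x ^ 2) :=
        integral_comp_abs (f := fun x : ℝ => x ^ 2 * Real.exp (-x ^ 2))
    _ = Real.sqrt π / 2 := by rw [h₂, hΓ]; ring

lemma integrable_sq_mul_exp_neg_sq : Integrable (fun y : ℝ => y ^ 2 * Real.exp (-y ^ 2)) := by
  have := integrable_rpow_mul_exp_neg_mul_sq (b := 1) one_pos (s := 2) (by norm_num)
  refine this.congr ?_
  filter_upwards with x
  norm_num [Real.rpow_natCast x 2]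

/-- If X⁽¹⁾, X⁽²⁾ are square-integrable real random variables, then
`‖L(X¹) − L(X²)‖²_{M₀} ≤ √π · E[(X¹ − X²)²]`, where the `M₀`-norm of a (signed)
difference of laws is `∫ |L(X¹)^(y) − L(X²)^(y)|² e^{-y²} dy` in terms of Fourier
transforms (characteristic functions). -/
theorem law_dist_M0_le (Ω : Type*) [MeasureSpace Ω] (ℙ : Measure Ω) [IsProbabilityMeasure ℙ]
    (X₁ X₂ : Ω → ℝ) (hX₁ : MemLp X₁ 2 ℙ) (hX₂ : MemLp X₂ 2 ℙ) :
    (∫ y : ℝ, ‖(∫ x : ℝ, Complex.exp (Complex.I * x * y) ∂(ℙ.map X₁)) -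
        (∫ x : ℝ, Complex.exp (Complex.I * x * y) ∂(ℙ.map X₂))‖ ^ 2 * Real.exp (-y ^ 2))
      ≤ Real.sqrt π * ∫ ω, (X₁ ω - X₂ ω) ^ 2 ∂ℙ := by
  have hm₁ : AEMeasurable X₁ ℙ := hX₁.aestronglyMeasurable.aemeasurable
  have hm₂ : AEMeasurable X₂ ℙ := hX₂.aestronglyMeasurable.aemeasurable
  set E : ℝ := ∫ ω, (X₁ ω - X₂ ω) ^ 2 ∂ℙ with hE
  have hE0 : 0 ≤ E := integral_nonneg fun ω => sq_nonneg _
  -- the L¹ norm of |X₁ - X₂|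
  have hsub : MemLp (fun ω => X₁ ω - X₂ ω) 2 ℙ := hX₁.sub hX₂
  have habs : MemLp (fun ω => |X₁ ω - X₂ ω|) 2 ℙ := by
    simpa [Real.norm_eq_abs] using hsub.norm
  have hint_abs : Integrable (fun ω => |X₁ ω - X₂ ω|) ℙ := habs.integrable one_le_two
  set A : ℝ := ∫ ω, |X₁ ω - X₂ ω| ∂ℙ with hA
  have hA0 : 0 ≤ A := integral_nonneg fun ω => abs_nonneg _
  -- Cauchy-Schwarz via nonnegativity of variance: A² ≤ E
  have hCS : A ^ 2 ≤ E := by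
    have hvar := ProbabilityTheory.variance_nonneg (fun ω => |X₁ ω - X₂ ω|) ℙ
    have hdef := ProbabilityTheory.variance_eq_sub habs
    have h2 : (∫ ω, |X₁ ω - X₂ ω| ^ 2 ∂ℙ) = E := by
      rw [hE]; congr 1; funext ω; rw [_root_.sq_abs]
    rw [hdef] at hvar
    simp only [Pi.pow_apply] at hvar
    rw [h2] at hvar
    simpa [hA] using hvar
  -- pointwise bound on the difference of characteristic functions
  have key : ∀ y : ℝ,
      ‖(∫ x : ℝ, Complex.exp (Complex.I * x * y) ∂(ℙ.map X₁)) -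
        (∫ x : ℝ, Complex.exp (Complex.I * x * y) ∂(ℙ.map X₂))‖ ≤ |y| * A := by
    intro y
    have hcont : Continuous (fun x : ℝ => Complex.exp (Complex.I * x * y)) := by
      fun_prop
    have hmap : ∀ (X : Ω → ℝ), AEMeasurable X ℙ →
        (∫ x : ℝ, Complex.exp (Complex.I * x * y) ∂(ℙ.map X))
          = ∫ ω, Complex.exp (Complex.I * (X ω) * y) ∂ℙ := by
      intro X hm
      rw [integral_map hm hcont.aestronglyMeasurable]
    have hnorm1 : ∀ (x : ℝ), ‖Complex.exp (Complex.I * x * y)‖ = 1 := by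
      intro x
      rw [Complex.norm_exp]
      simp [Complex.mul_re]
    have hintX : ∀ (X : Ω → ℝ), AEMeasurable X ℙ →
        Integrable (fun ω => Complex.exp (Complex.I * (X ω) * y)) ℙ := by
      intro X hm
      have hmeasX : AEStronglyMeasurable (fun ω => Complex.exp (Complex.I * (X ω) * y)) ℙ := by
        apply Complex.continuous_exp.comp_aestronglyMeasurable
        exact ((Complex.measurable_ofReal.comp_aemeasurable hm).const_mul
          Complex.I |>.mul_const _).aestronglyMeasurable
      refine Integrable.mono' (integrable_const 1) hmeasX ?_
      filter_upwards with ω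
      exact le_of_eq (hnorm1 _)
    have h₁ := hintX X₁ hm₁
    have h₂ := hintX X₂ hm₂
    rw [hmap X₁ hm₁, hmap X₂ hm₂, ← integral_sub h₁ h₂]
    calc ‖∫ ω, (Complex.exp (Complex.I * (X₁ ω) * y) - Complex.exp (Complex.I * (X₂ ω) * y)) ∂ℙ‖
        ≤ ∫ ω, ‖Complex.exp (Complex.I * (X₁ ω) * y) - Complex.exp (Complex.I * (X₂ ω) * y)‖ ∂ℙ :=
          norm_integral_le_integral_norm _
      _ ≤ ∫ ω, |y| * |X₁ ω - X₂ ω| ∂ℙ := by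
          refine integral_mono (h₁.sub h₂).norm (hint_abs.const_mul _) (fun ω => ?_)
          have e₁ : Complex.I * (X₁ ω) * y = ((X₁ ω * y : ℝ) : ℂ) * Complex.I := by
            push_cast; ring
          have e₂ : Complex.I * (X₂ ω) * y = ((X₂ ω * y : ℝ) : ℂ) * Complex.I := by
            push_cast; ring
          rw [e₁, e₂]
          calc ‖Complex.exp ((X₁ ω * y : ℝ) * Complex.I) - Complex.exp ((X₂ ω * y : ℝ) * Complex.I)‖
              ≤ |X₁ ω * y - X₂ ω * y| := norm_exp_I_mul_sub_le _ _
            _ = |y| * |X₁ ω - X₂ ω| := by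
                rw [← sub_mul, abs_mul]; ring
      _ = |y| * A := by rw [integral_const_mul]
  -- integrate the pointwise bound
  calc (∫ y : ℝ, ‖(∫ x : ℝ, Complex.exp (Complex.I * x * y) ∂(ℙ.map X₁)) -
        (∫ x : ℝ, Complex.exp (Complex.I * x * y) ∂(ℙ.map X₂))‖ ^ 2 * Real.exp (-y ^ 2))
      ≤ ∫ y : ℝ, (y ^ 2 * Real.exp (-y ^ 2)) * E := by
        refine integral_mono_of_nonneg (Filter.Eventually.of_forall fun y => by positivity)
          (integrable_sq_mul_exp_neg_sq.mul_const E)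
          (Filter.Eventually.of_forall fun y => ?_)
        have h1 : ‖(∫ x : ℝ, Complex.exp (Complex.I * x * y) ∂(ℙ.map X₁)) -
            (∫ x : ℝ, Complex.exp (Complex.I * x * y) ∂(ℙ.map X₂))‖ ^ 2 ≤ (|y| * A) ^ 2 := by
          have := key y
          exact pow_le_pow_left₀ (norm_nonneg _) this 2
        have h2 : (|y| * A) ^ 2 ≤ y ^ 2 * E := by
          rw [mul_pow, _root_.sq_abs]
          exact mul_le_mul_of_nonneg_left hCS (sq_nonneg y)
        have h3 : ‖(∫ x : ℝ, Complex.exp (Complex.I * x * y) ∂(ℙ.map X₁)) -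
            (∫ x : ℝ, Complex.exp (Complex.I * x * y) ∂(ℙ.map X₂))‖ ^ 2 ≤ y ^ 2 * E :=
          h1.trans h2
        calc ‖(∫ x : ℝ, Complex.exp (Complex.I * x * y) ∂(ℙ.map X₁)) -
            (∫ x : ℝ, Complex.exp (Complex.I * x * y) ∂(ℙ.map X₂))‖ ^ 2 * Real.exp (-y ^ 2)
            ≤ (y ^ 2 * E) * Real.exp (-y ^ 2) :=
              mul_le_mul_of_nonneg_right h3 (Real.exp_nonneg _)
          _ = (y ^ 2 * Real.exp (-y ^ 2)) * E := by ring
    _ = (∫ y : ℝ, y ^ 2 * Real.exp (-y ^ 2)) * E := integral_mul_const E _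
    _ = (Real.sqrt π / 2) * E := by rw [integral_sq_mul_exp_neg_sq]
    _ ≤ Real.sqrt π * E := by
        have : (0:ℝ) ≤ Real.sqrt π := Real.sqrt_nonneg _
        nlinarith
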